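/- (PAC-Bayes bound for control policies.) Let $\mathcal{E}$ be a measurable space of environments with probability measure $\mathcal{D}$, let $W$ be a measurable space of policy parameters with a prior probability measure $P_0$, and let $C : W \times \mathcal{E} \to [0,1]$ be a measurable cost function. Fix $\delta \in (0,1)$ and $N \in \mathbb{N}$, $N \geq 1$. Then with probability at least $1-\delta$ over the draw of i.i.d. samples $S = (E_1,\dots,E_N) \sim \mathcal{D}^N$, the following holds simultaneously for every probability measure $P$ on $W$: $\mathbb{E}_{E \sim \mathcal{D}}\,\mathbb{E}_{w \sim P}[C(w,E)] \leq \frac{1}{N}\sum_{i=1}^N \mathbb{E}_{w \sim P}[C(w,E_i)] + \sqrt{\frac{\KL(P\|P_0) + \log\frac{2\sqrt{N}}{\delta}}{2N}}$. -/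

import Mathlib

open MeasureTheory
open scoped ENNReal Classical

open Real in
/-- Hoeffding's scalar inequality. -/
lemma hoeff_scalar {p : ℝ} (hp0 : 0 ≤ p) (hp1 : p ≤ 1) (s : ℝ) :
    (1 - p) * Real.exp (p * s) + p * Real.exp ((p - 1) * s) ≤ Real.exp (s ^ 2 / 8) := by
  set a : ℝ := 1 - p with ha
  set b : ℝ := p with hb
  set u : ℝ → ℝ := fun s => a * Real.exp (b * s) + b * Real.exp ((b - 1) * s) with hu
  have hab : a + b = 1 := by simp [ha, hb]
  have ha0 : 0 ≤ a := by simp only [ha]; linarith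
  have hb0 : 0 ≤ b := hp0
  have hupos : ∀ s, 0 < u s := by
    intro s
    rcases lt_or_eq_of_le hb0 with h | h
    · have h1 : 0 < b * Real.exp ((b-1)*s) := by positivity
      have h2 : 0 ≤ a * Real.exp (b*s) := mul_nonneg ha0 (Real.exp_pos _).le
      simp only [hu]; linarith
    · have hb1 : b = 0 := h.symm
      have ha1 : a = 1 := by rw [ha, hb1]; ring
      simp only [hu, hb1, ha1]
      simpa using (Real.exp_pos ((0:ℝ) * s)).le.lt_of_ne (by positivity).ne
  set u₁ : ℝ → ℝ := fun s => a * b * Real.exp (b * s) - a * b * Real.exp ((b - 1) * s) with hu₁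
  set u₂ : ℝ → ℝ := fun s => a * b * (b * Real.exp (b * s) + a * Real.exp ((b - 1) * s)) with hu₂
  have hexp1 : ∀ s : ℝ, HasDerivAt (fun s : ℝ => Real.exp (b * s)) (Real.exp (b * s) * b) s :=
    fun s => by simpa using ((hasDerivAt_id s).const_mul b).exp
  have hexp2 : ∀ s : ℝ, HasDerivAt (fun s : ℝ => Real.exp ((b - 1) * s))
      (Real.exp ((b - 1) * s) * (b - 1)) s :=
    fun s => by simpa using ((hasDerivAt_id s).const_mul (b - 1)).exp
  have hd1 : ∀ s, HasDerivAt u (u₁ s) s := by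
    intro s
    have := (((hexp1 s).const_mul a)).add ((hexp2 s).const_mul b)
    refine this.congr_deriv ?_
    simp only [hu₁, ha]
    ring_nf
  have hd2 : ∀ s, HasDerivAt u₁ (u₂ s) s := by
    intro s
    have := (((hexp1 s).const_mul (a*b))).sub ((hexp2 s).const_mul (a*b))
    refine this.congr_deriv ?_
    simp only [hu₂, ha]
    ring_nf
  set w : ℝ → ℝ := fun s => s / 4 - u₁ s / u s with hw
  set w' : ℝ → ℝ := fun s => 1 / 4 - (u₂ s * u s - u₁ s * u₁ s) / (u s) ^ 2 with hw'
  have hdw : ∀ s, HasDerivAt w (w' s) s := by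
    intro s
    have hq := (hd2 s).div (hd1 s) (hupos s).ne'
    have hlin : HasDerivAt (fun s : ℝ => s / 4) (1 / 4 : ℝ) s := by
      simpa using (hasDerivAt_id s).div_const 4
    exact hlin.sub hq
  have hw'0 : ∀ s, 0 ≤ w' s := by
    intro s
    have hu2 : (0:ℝ) < (u s) ^ 2 := pow_pos (hupos s) 2
    have hid : u₂ s * u s - u₁ s * u₁ s
        = a * b * (Real.exp (b*s) * Real.exp ((b-1)*s)) * (a + b) ^ 2 := by
      simp only [hu, hu₁, hu₂]; ring
    have key : u₂ s * u s - u₁ s * u₁ s ≤ (u s) ^ 2 / 4 := by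
      rw [hid, hab]
      have e1 := Real.exp_pos (b * s)
      have e2 := Real.exp_pos ((b - 1) * s)
      have hsq : (0:ℝ) ≤ (a * Real.exp (b*s) - b * Real.exp ((b-1)*s)) ^ 2 := sq_nonneg _
      simp only [hu]
      ring_nf
      ring_nf at hsq
      nlinarith [hsq]
    have : (u₂ s * u s - u₁ s * u₁ s) / (u s) ^ 2 ≤ 1 / 4 := by
      rw [div_le_iff₀ hu2]; linarith
    simp only [hw']; linarith
  have hwmono : Monotone w := by
    have hdiff : Differentiable ℝ w := fun s => (hdw s).differentiableAt
    apply monotone_of_deriv_nonneg hdiff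
    intro s
    rw [(hdw s).deriv]
    exact hw'0 s
  have hw0 : w 0 = 0 := by simp [hw, hu₁]
  set g : ℝ → ℝ := fun s => s ^ 2 / 8 - Real.log (u s) with hg
  have hdg : ∀ s, HasDerivAt g (w s) s := by
    intro s
    have hsq : HasDerivAt (fun s : ℝ => s ^ 2 / 8) (s / 4) s := by
      have := (hasDerivAt_pow 2 s).div_const 8
      refine this.congr_deriv ?_
      rw [show (2:ℕ) - 1 = 1 from rfl, pow_one]
      push_cast
      ring
    have hlog : HasDerivAt (fun s => Real.log (u s)) (u₁ s / u s) s :=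
      (hd1 s).log (hupos s).ne'
    exact hsq.sub hlog
  have hdiffg : Differentiable ℝ g := fun x => (hdg x).differentiableAt
  have hgc : Continuous g := hdiffg.continuous
  have hu0 : u 0 = 1 := by simp [hu]; linarith
  have hg0 : g 0 = 0 := by simp [hg, hu0]
  have hgnn : ∀ s, 0 ≤ g s := by
    intro s
    rcases le_total 0 s with h | h
    · have : g 0 ≤ g s := by
        apply monotoneOn_of_deriv_nonneg (convex_Ici 0) hgc.continuousOn
          (fun x _ => (hdg x).differentiableAt.differentiableWithinAt) ?_ Set.self_mem_Ici h h
        intro x hx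
        rw [(hdg x).deriv]
        rw [interior_Ici] at hx
        calc (0:ℝ) = w 0 := hw0.symm
        _ ≤ w x := hwmono (le_of_lt hx)
      linarith [hg0 ▸ this]
    · have : g 0 ≤ g s := by
        apply antitoneOn_of_deriv_nonpos (convex_Iic 0) hgc.continuousOn
          (fun x _ => (hdg x).differentiableAt.differentiableWithinAt) ?_ h Set.self_mem_Iic h
        intro x hx
        rw [(hdg x).deriv]
        rw [interior_Iic] at hx
        calc w x ≤ w 0 := hwmono (le_of_lt hx)
        _ = 0 := hw0
      linarith [hg0 ▸ this]
  have := hgnn s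
  have hlog : Real.log (u s) ≤ s ^ 2 / 8 := by simp only [hg] at this; linarith
  calc (1 - p) * Real.exp (p * s) + p * Real.exp ((p - 1) * s) = u s := by simp only [hu, ha, hb]
  _ ≤ Real.exp (s ^ 2 / 8) := by
      rw [← Real.exp_log (hupos s)]
      exact Real.exp_le_exp.mpr hlog

open Real in
lemma integrable_of_bound {α : Type*} [MeasurableSpace α] (μ : Measure α) [IsFiniteMeasure μ]
    (f : α → ℝ) (hf : Measurable f) (M : ℝ) (hM : ∀ x, ‖f x‖ ≤ M) : Integrable f μ :=
  (integrable_const M).mono' hf.aestronglyMeasurable (ae_of_all _ hM)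

/-- Hoeffding's lemma, lintegral form, for `[0,1]`-valued random variables. -/
lemma hoeff_mgf {α : Type*} [MeasurableSpace α] (μ : Measure α) [IsProbabilityMeasure μ]
    (X : α → ℝ) (hX : Measurable X) (h01 : ∀ x, X x ∈ Set.Icc (0:ℝ) 1) (s : ℝ) :
    ∫⁻ x, ENNReal.ofReal (Real.exp (s * ((∫ y, X y ∂μ) - X x))) ∂μ ≤
      ENNReal.ofReal (Real.exp (s ^ 2 / 8)) := by
  have hXint : Integrable X μ :=
    integrable_of_bound μ X hX 1 (fun x => by
      rw [Real.norm_eq_abs, abs_le]; exact ⟨by linarith [(h01 x).1], (h01 x).2⟩)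
  set m : ℝ := ∫ y, X y ∂μ with hm
  have hm0 : 0 ≤ m := integral_nonneg (fun x => (h01 x).1)
  have hm1 : m ≤ 1 := by
    calc m ≤ ∫ _, (1:ℝ) ∂μ := integral_mono hXint (integrable_const 1) (fun x => (h01 x).2)
    _ = 1 := by simp
  set g : α → ℝ := fun x => Real.exp (s * m) * ((1 - X x) + X x * Real.exp (-s)) with hg
  have hgmeas : Measurable g := by
    apply Measurable.const_mul
    exact ((measurable_const.sub hX).add (hX.mul_const _))
  have hgnn : ∀ x, 0 ≤ g x := by
    intro x
    have := (h01 x).1; have := (h01 x).2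
    have : (0:ℝ) ≤ (1 - X x) + X x * Real.exp (-s) :=
      add_nonneg (by linarith) (mul_nonneg (by linarith) (Real.exp_pos _).le)
    positivity
  have hpt : ∀ x, Real.exp (s * (m - X x)) ≤ g x := by
    intro x
    have h1 := (h01 x).1; have h2 := (h01 x).2
    have hconv : Real.exp ((1 - X x) * 0 + X x * (-s)) ≤
        (1 - X x) * Real.exp 0 + X x * Real.exp (-s) :=
      convexOn_exp.2 (Set.mem_univ 0) (Set.mem_univ (-s)) (by linarith) h1 (by ring)
    have : Real.exp (-(s * X x)) ≤ (1 - X x) + X x * Real.exp (-s) := by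
      simpa [mul_comm] using hconv
    calc Real.exp (s * (m - X x)) = Real.exp (s * m) * Real.exp (-(s * X x)) := by
          rw [← Real.exp_add]; ring_nf
    _ ≤ g x := by
        simp only [hg]
        exact mul_le_mul_of_nonneg_left this (Real.exp_pos _).le
  have hgint : Integrable g μ := by
    apply integrable_of_bound μ g hgmeas (Real.exp (s*m) * (1 + Real.exp (-s)))
    intro x
    rw [Real.norm_eq_abs, abs_of_nonneg (hgnn x)]
    simp only [hg]
    have h1 := (h01 x).1; have h2 := (h01 x).2
    have : (1 - X x) + X x * Real.exp (-s) ≤ 1 + Real.exp (-s) := by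
      nlinarith [(Real.exp_pos (-s)).le]
    exact mul_le_mul_of_nonneg_left this (Real.exp_pos _).le
  calc ∫⁻ x, ENNReal.ofReal (Real.exp (s * (m - X x))) ∂μ
      ≤ ∫⁻ x, ENNReal.ofReal (g x) ∂μ :=
        lintegral_mono (fun x => ENNReal.ofReal_le_ofReal (hpt x))
  _ = ENNReal.ofReal (∫ x, g x ∂μ) :=
      (ofReal_integral_eq_lintegral_ofReal hgint (ae_of_all _ hgnn)).symm
  _ ≤ ENNReal.ofReal (Real.exp (s ^ 2 / 8)) := by
      apply ENNReal.ofReal_le_ofReal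
      have hint : ∫ x, g x ∂μ = Real.exp (s*m) * ((1 - m) + m * Real.exp (-s)) := by
        simp only [hg]
        rw [integral_const_mul]
        congr 1
        rw [integral_add (by exact (integrable_const 1).sub hXint) (hXint.mul_const _)]
        rw [integral_sub (integrable_const 1) hXint, integral_mul_const]
        simp [hm]
      rw [hint]
      have := hoeff_scalar hm0 hm1 s
      calc Real.exp (s*m) * ((1 - m) + m * Real.exp (-s))
          = (1 - m) * Real.exp (m * s) + m * Real.exp ((m - 1) * s) := by
            rw [show (m-1)*s = m*s + (-s) by ring, Real.exp_add, show s*m = m*s by ring]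
            ring
      _ ≤ Real.exp (s ^ 2 / 8) := this

/-- Factorization of a lintegral of a product over `Measure.pi`. -/
lemma lintegral_pi_prod {α : Type*} [MeasurableSpace α] (μ : Measure α) [IsProbabilityMeasure μ] :
    ∀ (n : ℕ) (g : Fin n → α → ℝ≥0∞), (∀ i, Measurable (g i)) →
    ∫⁻ x, ∏ i, g i (x i) ∂(Measure.pi fun _ : Fin n => μ) = ∏ i, ∫⁻ a, g i a ∂μ := by
  intro n
  induction n with
  | zero => intro g hg; simp
  | succ n ih =>
    intro g hg
    have hmp := (measurePreserving_piFinSuccAbove (fun _ : Fin (n+1) => μ) 0).symm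
    have hmeas : Measurable (fun x : Fin (n+1) → α => ∏ i, g i (x i)) :=
      Finset.measurable_prod _ (fun i _ => (hg i).comp (measurable_pi_apply i))
    rw [← MeasurePreserving.lintegral_comp hmp hmeas]
    have hexp : ∀ (y : α × (Fin n → α)),
        (∏ i, g i (((MeasurableEquiv.piFinSuccAbove (fun _ : Fin (n+1) => α) 0).symm y) i))
        = g 0 y.1 * ∏ j : Fin n, g j.succ (y.2 j) := by
      intro y
      simp only [MeasurableEquiv.piFinSuccAbove_symm_apply, Fin.zero_succAbove,
        Fin.insertNth_zero]
      rw [Fin.prod_univ_succ]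
      simp [Fin.cons_zero, Fin.cons_succ]
    simp only [hexp]
    rw [lintegral_prod]
    · have : ∀ y : α, ∫⁻ z : Fin n → α, g 0 y * ∏ j : Fin n, g j.succ (z j)
          ∂(Measure.pi fun _ : Fin n => μ) = g 0 y * ∏ j : Fin n, ∫⁻ a, g j.succ a ∂μ := by
        intro y
        rw [lintegral_const_mul _ (Finset.measurable_prod _
          (fun j _ => (hg j.succ).comp (measurable_pi_apply j)))]
        rw [ih (fun j => g j.succ) (fun j => hg j.succ)]
      simp only [this]
      rw [lintegral_mul_const _ (hg 0), Fin.prod_univ_succ]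
    · apply Measurable.aemeasurable
      apply Measurable.mul
      · exact (hg 0).comp measurable_fst
      · exact Finset.measurable_prod _ (fun j _ =>
          (hg j.succ).comp ((measurable_pi_apply j).comp measurable_snd))

open Real in
/-- Change of measure: `∫ log F dP ≤ KL(P‖P₀) + log c` when `∫ F dP₀ ≤ c`. -/
lemma change_of_measure {W : Type*} [MeasurableSpace W] (P P₀ : Measure W)
    [IsProbabilityMeasure P] [IsProbabilityMeasure P₀] (hac : P ≪ P₀)
    (hint : Integrable (fun w => Real.log (P.rnDeriv P₀ w).toReal) P)
    (F : W → ℝ) (hF : Measurable F) (Flb Fub : ℝ) (hFlb : 0 < Flb)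
    (hbd : ∀ w, F w ∈ Set.Icc Flb Fub)
    (c : ℝ) (hc0 : 0 < c) (hcle : ∫⁻ w, ENNReal.ofReal (F w) ∂P₀ ≤ ENNReal.ofReal c) :
    ∫ w, Real.log (F w) ∂P ≤
      (∫ w, Real.log (P.rnDeriv P₀ w).toReal ∂P) + Real.log c := by
  set g : W → ℝ := fun w => (P.rnDeriv P₀ w).toReal with hgdef
  have hgmeas : Measurable g := (Measure.measurable_rnDeriv P P₀).ennreal_toReal
  have hgood : ∀ᵐ w ∂P, 0 < g w ∧ P.rnDeriv P₀ w < ⊤ := by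
    filter_upwards [Measure.rnDeriv_pos hac, hac.ae_le (Measure.rnDeriv_lt_top P P₀)]
      with w h1 h2
    exact ⟨ENNReal.toReal_pos h1.ne' h2.ne, h2⟩
  have hFpos : ∀ w, 0 < F w := fun w => lt_of_lt_of_le hFlb (hbd w).1
  -- the quotient function
  set q : W → ℝ := fun w => F w / g w with hqdef
  have hqmeas : Measurable q := hF.div hgmeas
  -- lintegral bound for q
  have hqlint : ∫⁻ w, ENNReal.ofReal (q w) ∂P ≤ ENNReal.ofReal c := by
    rw [← MeasureTheory.lintegral_rnDeriv_mul hac (hqmeas.ennreal_ofReal.aemeasurable)]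
    refine le_trans (le_trans (lintegral_mono_ae ?_) (lintegral_mono (fun w => le_refl _))) hcle
    filter_upwards [Measure.rnDeriv_lt_top P P₀] with w hw
    rcases eq_or_lt_of_le (zero_le : 0 ≤ P.rnDeriv P₀ w) with h0 | h0
    · rw [← h0, zero_mul]; exact zero_le
    · have hgw : 0 < g w := ENNReal.toReal_pos h0.ne' hw.ne
      have : P.rnDeriv P₀ w = ENNReal.ofReal (g w) := by
        rw [hgdef]; simp [ENNReal.ofReal_toReal hw.ne]
      rw [this, hqdef]
      rw [ENNReal.ofReal_div_of_pos hgw]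
      rw [ENNReal.mul_div_cancel (by simpa [hgw.ne'] using ENNReal.ofReal_pos.mpr hgw |>.ne')
        ENNReal.ofReal_ne_top]
  have hqnn : ∀ᵐ w ∂P, 0 ≤ q w := by
    filter_upwards [hgood] with w hw
    exact (div_pos (hFpos w) hw.1).le
  have hqint : Integrable q P := by
    constructor
    · exact hqmeas.aestronglyMeasurable
    · rw [hasFiniteIntegral_iff_ofReal hqnn]
      exact lt_of_le_of_lt hqlint ENNReal.ofReal_lt_top
  have hqle : ∫ w, q w ∂P ≤ c := by
    rw [integral_eq_lintegral_of_nonneg_ae hqnn hqmeas.aestronglyMeasurable]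
    calc (∫⁻ w, ENNReal.ofReal (q w) ∂P).toReal ≤ (ENNReal.ofReal c).toReal :=
          ENNReal.toReal_mono ENNReal.ofReal_ne_top hqlint
    _ = c := ENNReal.toReal_ofReal hc0.le
  have hlogFint : Integrable (fun w => Real.log (F w)) P := by
    apply integrable_of_bound P _ (hF.log) (|Real.log Flb| + |Real.log Fub|)
    intro w
    rw [Real.norm_eq_abs]
    have h1 : Real.log Flb ≤ Real.log (F w) := Real.log_le_log hFlb (hbd w).1
    have h2 : Real.log (F w) ≤ Real.log Fub := Real.log_le_log (hFpos w) (hbd w).2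
    rw [abs_le]
    constructor
    · calc -(|Real.log Flb| + |Real.log Fub|) ≤ -|Real.log Flb| := by
            linarith [abs_nonneg (Real.log Fub)]
      _ ≤ Real.log Flb := neg_abs_le _
      _ ≤ _ := h1
    · calc Real.log (F w) ≤ Real.log Fub := h2
      _ ≤ |Real.log Fub| := le_abs_self _
      _ ≤ _ := by linarith [abs_nonneg (Real.log Flb)]
  -- pointwise inequality
  have hpt : ∀ᵐ w ∂P, Real.log (F w) ≤ Real.log (g w) + (q w / c - 1 + Real.log c) := by
    filter_upwards [hgood] with w hw
    have hgw := hw.1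
    have hFw := hFpos w
    have hqw : 0 < q w := div_pos hFw hgw
    have h1 : Real.log (F w) = Real.log (g w) + Real.log (q w) := by
      rw [hqdef]
      rw [Real.log_div hFw.ne' hgw.ne']
      ring
    have h2 : Real.log (q w) = Real.log (q w / c) + Real.log c := by
      rw [Real.log_div hqw.ne' hc0.ne']
      ring
    have h3 : Real.log (q w / c) ≤ q w / c - 1 :=
      Real.log_le_sub_one_of_pos (div_pos hqw hc0)
    linarith
  have hrhsint : Integrable (fun w => Real.log (g w) + (q w / c - 1 + Real.log c)) P :=
    hint.add (((hqint.div_const c).sub (integrable_const 1)).add (integrable_const _))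
  calc ∫ w, Real.log (F w) ∂P ≤ ∫ w, (Real.log (g w) + (q w / c - 1 + Real.log c)) ∂P :=
        integral_mono_ae hlogFint hrhsint hpt
  _ = (∫ w, Real.log (g w) ∂P) + ((∫ w, q w ∂P) / c - 1 + Real.log c) := by
      have h2int : Integrable (fun w => q w / c - 1 + Real.log c) P :=
        ((hqint.div_const c).sub (integrable_const 1)).add (integrable_const _)
      have e1 := integral_add hint h2int
      rw [e1]
      congr 1
      have hsub : Integrable (fun w => q w / c - 1) P := by
        have := (hqint.div_const c).sub (integrable_const (1:ℝ))
        exact this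
      have e2 := integral_add (f := fun w => q w / c - 1) (g := fun _ => Real.log c)
        hsub (integrable_const (Real.log c)) (μ := P)
      rw [e2]
      have e3 := integral_sub (f := fun w => q w / c) (g := fun _ => (1:ℝ))
        (hqint.div_const c) (integrable_const (1:ℝ)) (μ := P)
      rw [e3]
      simp [integral_div]
  _ ≤ (∫ w, Real.log (g w) ∂P) + Real.log c := by
      have : (∫ w, q w ∂P) / c ≤ 1 := by
        rw [div_le_one hc0]; exact hqle
      linarith

open Real in
lemma nat_sqrt_bounds {N : ℕ} (hN : 1 ≤ N) :
    N ≤ (Nat.sqrt (N-1) + 1)^2 ∧ (Nat.sqrt (N-1) + 1)^2 ≤ 2*N := by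
  set s := Nat.sqrt (N-1) with hs
  have h1 : s^2 ≤ N - 1 := Nat.sqrt_le' (N-1)
  have h2 : N - 1 < (s+1)^2 := Nat.lt_succ_sqrt' (N-1)
  have hN1 : N - 1 + 1 = N := Nat.succ_pred_eq_of_pos hN
  constructor
  · omega
  · nlinarith [h1, h2, hN1]

lemma grid_log_bound {a b : ℝ} (ha : 1 ≤ a) (hb : 1 ≤ b) (h1 : a ≤ b^2) (h2 : b^2 ≤ 2*a) :
    a/(2*b^2) + Real.log b ≤ Real.log 2 + Real.log a / 2 := by
  have ha0 : 0 < a := by linarith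
  have hb0 : 0 < b := by linarith
  set u := b^2/a with hu
  have hu1 : 1 ≤ u := (le_div_iff₀ ha0).mpr (by linarith)
  have hu2 : u ≤ 2 := (div_le_iff₀ ha0).mpr h2
  have hu0 : 0 < u := by linarith
  have hlogb : Real.log b = (Real.log u + Real.log a)/2 := by
    have e1 : Real.log u = Real.log (b^2) - Real.log a := Real.log_div (by positivity) ha0.ne'
    have e2 : Real.log (b^2) = 2 * Real.log b := by
      rw [Real.log_pow]; push_cast; ring
    rw [e1, e2]; ring
  have htan : Real.log u ≤ Real.log 2 + u/2 - 1 := by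
    have h3 : Real.log (u/2) ≤ u/2 - 1 := Real.log_le_sub_one_of_pos (by positivity)
    rw [Real.log_div hu0.ne' two_ne_zero] at h3
    linarith
  have hlog2 : (0.6931471803:ℝ) < Real.log 2 := Real.log_two_gt_d9
  have hfrac : a/(2*b^2) = 1/(2*u) := by
    rw [hu]; field_simp
  have hkey : 1/(2*u) + u/4 ≤ 3/4 := by
    have h5 : (2 + u^2 - 3*u)/(4*u) ≤ 0 :=
      div_nonpos_of_nonpos_of_nonneg (by nlinarith) (by positivity)
    have h6 : 1/(2*u) + u/4 - 3/4 = (2 + u^2 - 3*u)/(4*u) := by field_simp; ring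
    linarith
  rw [hfrac, hlogb]
  linarith

lemma exists_grid {J : ℕ} (hJ : 1 ≤ J) {t : ℝ} (ht0 : 0 < t) (ht1 : t ≤ 1) :
    ∃ j : ℕ, j < J ∧ |t - ((j:ℝ) + 1/2)/(J:ℝ)| ≤ 1/(2*(J:ℝ)) := by
  have hJ0 : (0:ℝ) < (J:ℝ) := by exact_mod_cast hJ
  set k := ⌈t * (J:ℝ)⌉₊ with hk
  have hk1 : 1 ≤ k := Nat.one_le_ceil_iff.mpr (by positivity)
  have hkJ : k ≤ J := Nat.ceil_le.mpr (by nlinarith)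
  have hceil1 : t * (J:ℝ) ≤ (k:ℝ) := Nat.le_ceil _
  have hceil2 : (k:ℝ) < t * (J:ℝ) + 1 := Nat.ceil_lt_add_one (by positivity)
  refine ⟨k - 1, by omega, ?_⟩
  have hcast : ((k - 1 : ℕ) : ℝ) = (k:ℝ) - 1 := by
    push_cast [Nat.cast_sub hk1]; ring
  rw [hcast]
  have heq : t - ((k:ℝ) - 1 + 1/2)/(J:ℝ) = (t * (J:ℝ) - ((k:ℝ) - 1 + 1/2))/(J:ℝ) := by
    field_simp
  rw [heq, show (1:ℝ)/(2*(J:ℝ)) = (1/2)/(J:ℝ) by ring, abs_div, abs_of_pos hJ0]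
  refine div_le_div_of_nonneg_right ?_ hJ0.le
  rw [abs_le]
  constructor <;> linarith

noncomputable def klDiv {Ω : Type*} [MeasurableSpace Ω] (μ ν : Measure Ω) : ℝ≥0∞ :=
  if μ ≪ ν ∧ Integrable (fun x => Real.log (μ.rnDeriv ν x).toReal) μ then
    ENNReal.ofReal (∫ x, Real.log (μ.rnDeriv ν x).toReal ∂μ)
  else ∞

set_option maxHeartbeats 2000000 in
/-- **PAC-Bayes bound for control policies.**  With probability at least `1 - δ` over the
draw of `N` i.i.d. training environments `S ∼ D^N`, simultaneously for every posterior
probability measure `P` on the policy-parameter space `W`,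
`𝔼_{E∼D} 𝔼_{w∼P} [C w E] ≤ (1/N) ∑ i, 𝔼_{w∼P} [C w (S i)]
  + √((KL(P‖P₀) + log (2√N/δ)) / (2N))`,
where the right-hand side is interpreted in `ℝ≥0∞` (so it is `+∞` when `KL(P‖P₀) = +∞`). -/
theorem pac_bayes_control {𝓔 W : Type*} [MeasurableSpace 𝓔] [MeasurableSpace W]
    (D : Measure 𝓔) [IsProbabilityMeasure D]
    (P₀ : Measure W) [IsProbabilityMeasure P₀]
    (C : W → 𝓔 → ℝ) (hC : Measurable (Function.uncurry C))
    (hC01 : ∀ w e, C w e ∈ Set.Icc (0 : ℝ) 1)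
    (δ : ℝ) (hδ : δ ∈ Set.Ioo (0 : ℝ) 1) (N : ℕ) (hN : 1 ≤ N) :
    ENNReal.ofReal (1 - δ) ≤
      (Measure.pi fun _ : Fin N => D) {S : Fin N → 𝓔 |
        ∀ P : Measure W, IsProbabilityMeasure P →
          ENNReal.ofReal (∫ e, ∫ w, C w e ∂P ∂D) ≤
            ENNReal.ofReal ((N : ℝ)⁻¹ * ∑ i : Fin N, ∫ w, C w (S i) ∂P) +
              ((klDiv P P₀ + ENNReal.ofReal (Real.log (2 * Real.sqrt N / δ))) /
                (2 * N)) ^ (1 / 2 : ℝ)} := by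
  obtain ⟨hδ0, hδ1⟩ := hδ
  have hN0 : (0:ℝ) < (N:ℝ) := by exact_mod_cast hN
  have hN1 : (1:ℝ) ≤ (N:ℝ) := by exact_mod_cast hN
  set μ := Measure.pi fun _ : Fin N => D with hμdef
  have hμprob : IsProbabilityMeasure μ := by rw [hμdef]; infer_instance
  -- basic objects
  set L : W → ℝ := fun w => ∫ e, C w e ∂D with hLdef
  have hLmeas : Measurable L := hC.stronglyMeasurable.integral_prod_right'.measurable
  clear_value L
  have hCwmeas : ∀ w, Measurable (fun e => C w e) := fun w => hC.of_uncurry_left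
  have hCemeas : ∀ e, Measurable (fun w => C w e) := fun e => hC.of_uncurry_right
  have hCint : ∀ w, Integrable (fun e => C w e) D := fun w =>
    integrable_of_bound D _ (hCwmeas w) 1 (fun e => by
      rw [Real.norm_eq_abs, abs_le]
      exact ⟨by linarith [(hC01 w e).1], (hC01 w e).2⟩)
  have hL01 : ∀ w, L w ∈ Set.Icc (0:ℝ) 1 := by
    intro w
    simp only [hLdef]
    constructor
    · exact integral_nonneg (fun e => (hC01 w e).1)
    · calc ∫ e, C w e ∂D ≤ ∫ _, (1:ℝ) ∂D :=
            integral_mono (hCint w) (integrable_const 1) (fun e => (hC01 w e).2)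
      _ = 1 := by simp
  set J : ℕ := Nat.sqrt (N-1) + 1 with hJdef
  have hJpos : 1 ≤ J := Nat.le_add_left 1 _
  have hJsq1 : N ≤ J^2 := by rw [hJdef]; exact (nat_sqrt_bounds hN).1
  have hJsq2 : J^2 ≤ 2*N := by rw [hJdef]; exact (nat_sqrt_bounds hN).2
  clear_value J
  have hJ0 : (0:ℝ) < (J:ℝ) := by exact_mod_cast hJpos
  have hJ1 : (1:ℝ) ≤ (J:ℝ) := by exact_mod_cast hJpos
  have hJR1 : (N:ℝ) ≤ (J:ℝ)^2 := by exact_mod_cast hJsq1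
  have hJR2 : ((J:ℝ))^2 ≤ 2*(N:ℝ) := by exact_mod_cast hJsq2
  set lam : ℕ → ℝ := fun j => 4*(N:ℝ)*(((j:ℝ) + 1/2)/(J:ℝ)) with hlamdef
  clear_value lam
  have hlam_pos : ∀ j, 0 < lam j := by
    intro j
    have hjc : (0:ℝ) ≤ (j:ℝ) := Nat.cast_nonneg j
    rw [hlamdef]
    positivity
  have hlam_le : ∀ j, j < J → lam j ≤ 4*(N:ℝ) := by
    intro j hj
    have hj' : (j:ℝ) + 1/2 ≤ (J:ℝ) := by
      have : (j:ℝ) + 1 ≤ (J:ℝ) := by exact_mod_cast hj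
      linarith
    have hd1 : ((j:ℝ) + 1/2)/(J:ℝ) ≤ 1 := by
      rw [div_le_one hJ0]; exact hj'
    have hd0 : (0:ℝ) ≤ ((j:ℝ) + 1/2)/(J:ℝ) := by positivity
    rw [hlamdef]
    nlinarith [hd1, hd0, hN0]
  set Dl : W → (Fin N → 𝓔) → ℝ := fun w S => L w - (N:ℝ)⁻¹ * ∑ i, C w (S i) with hDldef
  have hDlmeas : Measurable (Function.uncurry Dl) := by
    apply Measurable.sub
    · exact hLmeas.comp measurable_fst
    · apply Measurable.const_mul
      apply Finset.measurable_sum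
      intro i _
      exact hC.comp (measurable_fst.prodMk ((measurable_pi_apply i).comp measurable_snd))
  clear_value Dl
  have hemp01 : ∀ (w : W) (S : Fin N → 𝓔), (N:ℝ)⁻¹ * ∑ i, C w (S i) ∈ Set.Icc (0:ℝ) 1 := by
    intro w S
    constructor
    · apply mul_nonneg (by positivity)
      exact Finset.sum_nonneg (fun i _ => (hC01 w (S i)).1)
    · rw [inv_mul_le_iff₀ hN0, mul_one]
      calc ∑ i, C w (S i) ≤ ∑ _i : Fin N, (1:ℝ) :=
            Finset.sum_le_sum (fun i _ => (hC01 w (S i)).2)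
      _ = N := by simp
  have hDl_bd : ∀ w S, |Dl w S| ≤ 1 := by
    intro w S
    rw [abs_le]
    obtain ⟨h11, h12⟩ := hL01 w
    obtain ⟨h21, h22⟩ := hemp01 w S
    constructor
    · simp only [hDldef]; linarith
    · simp only [hDldef]; linarith
  set F : W → (Fin N → 𝓔) → ℝ := fun w S =>
    (J:ℝ)⁻¹ * ∑ j ∈ Finset.range J, Real.exp (lam j * Dl w S - (lam j)^2/(8*(N:ℝ))) with hFdef
  have hgm : Measurable (fun x : ℝ => (J:ℝ)⁻¹ *
      ∑ j ∈ Finset.range J, Real.exp (lam j * x - (lam j)^2/(8*(N:ℝ)))) := by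
    apply Measurable.const_mul
    apply Finset.measurable_sum
    intro j _
    exact ((measurable_id.const_mul (lam j)).sub_const _).exp
  have hFmeas : Measurable (Function.uncurry F) := by
    have heq : Function.uncurry F = (fun x : ℝ => (J:ℝ)⁻¹ *
        ∑ j ∈ Finset.range J, Real.exp (lam j * x - (lam j)^2/(8*(N:ℝ)))) ∘
        (Function.uncurry Dl) := rfl
    rw [heq]
    exact hgm.comp hDlmeas
  clear_value F
  set Flb : ℝ := (J:ℝ)⁻¹ * Real.exp (-(6*(N:ℝ))) with hFlbdef
  set Fub : ℝ := Real.exp (4*(N:ℝ)) with hFubdef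
  have hFlb0 : 0 < Flb := by rw [hFlbdef]; positivity
  clear_value Flb Fub
  have hFbd : ∀ w S, F w S ∈ Set.Icc Flb Fub := by
    intro w S
    have hDb := hDl_bd w S
    rw [abs_le] at hDb
    constructor
    · have h0J : (0:ℕ) ∈ Finset.range J := Finset.mem_range.mpr hJpos
      have hterm : Real.exp (-(6*(N:ℝ))) ≤
          Real.exp (lam 0 * Dl w S - (lam 0)^2/(8*(N:ℝ))) := by
        apply Real.exp_le_exp.mpr
        have hl0 := hlam_pos 0
        have hl4 := hlam_le 0 hJpos
        have e1 : -(4*(N:ℝ)) ≤ lam 0 * Dl w S := by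
          have h := mul_le_mul_of_nonneg_left hDb.1 hl0.le
          nlinarith [h]
        have e2 : (lam 0)^2/(8*(N:ℝ)) ≤ 2*(N:ℝ) := by
          rw [div_le_iff₀ (by positivity)]
          nlinarith [mul_le_mul hl4 hl4 hl0.le (by positivity : (0:ℝ) ≤ 4*(N:ℝ))]
        linarith
      have hsum : Real.exp (lam 0 * Dl w S - (lam 0)^2/(8*(N:ℝ))) ≤
          ∑ j ∈ Finset.range J, Real.exp (lam j * Dl w S - (lam j)^2/(8*(N:ℝ))) :=
        Finset.single_le_sum (f := fun j => Real.exp (lam j * Dl w S - (lam j)^2/(8*(N:ℝ))))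
          (fun j _ => (Real.exp_pos _).le) h0J
      simp only [hFdef, hFlbdef]
      apply mul_le_mul_of_nonneg_left _ (by positivity)
      linarith
    · simp only [hFdef, hFubdef]
      rw [inv_mul_le_iff₀ hJ0]
      calc ∑ j ∈ Finset.range J, Real.exp (lam j * Dl w S - (lam j)^2/(8*(N:ℝ)))
          ≤ ∑ _j ∈ Finset.range J, Real.exp (4*(N:ℝ)) := by
            apply Finset.sum_le_sum
            intro j hj
            apply Real.exp_le_exp.mpr
            have hl0 := hlam_pos j
            have hl4 := hlam_le j (Finset.mem_range.mp hj)
            have hh1 : lam j * Dl w S ≤ 4*(N:ℝ) := by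
              have h := mul_le_mul_of_nonneg_left hDb.2 hl0.le
              nlinarith [h]
            have hh2 : (0:ℝ) ≤ (lam j)^2/(8*(N:ℝ)) := by positivity
            linarith
      _ = J * Real.exp (4*(N:ℝ)) := by
            rw [Finset.sum_const, Finset.card_range]; simp [nsmul_eq_mul]
  -- Hoeffding bound
  have hHoeff : ∀ (w : W) (j : ℕ),
      ∫⁻ S, ENNReal.ofReal (Real.exp (lam j * Dl w S)) ∂μ ≤
        ENNReal.ofReal (Real.exp ((lam j)^2/(8*(N:ℝ)))) := by
    intro w j
    set s : ℝ := lam j / (N:ℝ) with hsdef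
    have hrw : ∀ S : Fin N → 𝓔, lam j * Dl w S =
        ∑ i : Fin N, s * ((∫ y, C w y ∂D) - C w (S i)) := by
      intro S
      rw [← Finset.mul_sum]
      have e1 : ∑ i : Fin N, ((∫ y, C w y ∂D) - C w (S i)) =
          (N:ℝ) * (∫ y, C w y ∂D) - ∑ i, C w (S i) := by
        rw [Finset.sum_sub_distrib, Finset.sum_const, Finset.card_univ]
        simp [nsmul_eq_mul]
      rw [e1, hsdef]
      simp only [hDldef, hLdef]
      field_simp
      try ring
      try tauto
    simp only [hrw]
    have hfact : ∀ S : Fin N → 𝓔,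
        ENNReal.ofReal (Real.exp (∑ i : Fin N, s * ((∫ y, C w y ∂D) - C w (S i))))
        = ∏ i : Fin N, ENNReal.ofReal (Real.exp (s * ((∫ y, C w y ∂D) - C w (S i)))) := by
      intro S
      rw [Real.exp_sum]
      exact ENNReal.ofReal_prod_of_nonneg (fun i _ => (Real.exp_pos _).le)
    simp only [hfact]
    rw [hμdef]
    rw [lintegral_pi_prod D N (fun i e => ENNReal.ofReal (Real.exp (s * ((∫ y, C w y ∂D) - C w e))))
      (fun i => (((hCwmeas w).const_sub _).const_mul _).exp.ennreal_ofReal)]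
    calc ∏ _i : Fin N, ∫⁻ e, ENNReal.ofReal (Real.exp (s * ((∫ y, C w y ∂D) - C w e))) ∂D
        ≤ ∏ _i : Fin N, ENNReal.ofReal (Real.exp (s^2/8)) := by
          apply Finset.prod_le_prod'
          intro i _
          exact hoeff_mgf D (fun e => C w e) (hCwmeas w) (fun e => hC01 w e) s
    _ = ENNReal.ofReal (Real.exp ((lam j)^2/(8*(N:ℝ)))) := by
        rw [Finset.prod_const, Finset.card_univ, Fintype.card_fin]
        rw [← ENNReal.ofReal_pow (Real.exp_pos _).le]
        congr 1
        rw [← Real.exp_nat_mul]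
        congr 1
        rw [hsdef]
        field_simp
        try ring
        try tauto
  -- expectation of G
  set G : (Fin N → 𝓔) → ℝ≥0∞ := fun S => ∫⁻ w, ENNReal.ofReal (F w S) ∂P₀ with hGdef
  have hGmeas : Measurable G := by
    apply Measurable.lintegral_prod_right'
      (f := fun p : (Fin N → 𝓔) × W => ENNReal.ofReal (F p.2 p.1))
    exact (hFmeas.comp measurable_swap).ennreal_ofReal
  clear_value G
  have hinner_one : ∀ w, ∫⁻ S, ENNReal.ofReal (F w S) ∂μ ≤ 1 := by
    intro w
    have hexp : ∀ S, ENNReal.ofReal (F w S) = ENNReal.ofReal ((J:ℝ)⁻¹) *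
        ∑ j ∈ Finset.range J, (ENNReal.ofReal (Real.exp (lam j * Dl w S)) *
          ENNReal.ofReal (Real.exp (-((lam j)^2/(8*(N:ℝ)))))) := by
      intro S
      simp only [hFdef]
      rw [ENNReal.ofReal_mul (by positivity)]
      congr 1
      rw [ENNReal.ofReal_sum_of_nonneg (fun j _ => (Real.exp_pos _).le)]
      apply Finset.sum_congr rfl
      intro j _
      rw [← ENNReal.ofReal_mul (Real.exp_pos _).le, ← Real.exp_add]
      congr 2
      try ring
    simp only [hexp]
    rw [lintegral_const_mul]
    swap
    · apply Finset.measurable_sum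
      intro j _
      apply Measurable.mul_const
      apply Measurable.ennreal_ofReal
      apply Measurable.exp
      apply Measurable.const_mul
      exact hDlmeas.comp (measurable_const.prodMk measurable_id)
    rw [lintegral_finset_sum]
    swap
    · intro j _
      apply Measurable.mul_const
      apply Measurable.ennreal_ofReal
      apply Measurable.exp
      apply Measurable.const_mul
      exact hDlmeas.comp (measurable_const.prodMk measurable_id)
    have hterm : ∀ j ∈ Finset.range J,
        ∫⁻ S, ENNReal.ofReal (Real.exp (lam j * Dl w S)) *
          ENNReal.ofReal (Real.exp (-((lam j)^2/(8*(N:ℝ))))) ∂μ ≤ 1 := by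
      intro j _
      rw [lintegral_mul_const]
      swap
      · apply Measurable.ennreal_ofReal
        apply Measurable.exp
        apply Measurable.const_mul
        exact hDlmeas.comp (measurable_const.prodMk measurable_id)
      calc _ ≤ ENNReal.ofReal (Real.exp ((lam j)^2/(8*(N:ℝ)))) *
            ENNReal.ofReal (Real.exp (-((lam j)^2/(8*(N:ℝ))))) :=
            mul_le_mul_left (hHoeff w j) _
      _ = 1 := by
          rw [← ENNReal.ofReal_mul (Real.exp_pos _).le, ← Real.exp_add]
          simp
    calc ENNReal.ofReal ((J:ℝ)⁻¹) * ∑ j ∈ Finset.range J,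
          ∫⁻ S, ENNReal.ofReal (Real.exp (lam j * Dl w S)) *
            ENNReal.ofReal (Real.exp (-((lam j)^2/(8*(N:ℝ))))) ∂μ
        ≤ ENNReal.ofReal ((J:ℝ)⁻¹) * ∑ _j ∈ Finset.range J, 1 :=
          mul_le_mul_right (Finset.sum_le_sum hterm) _
    _ = ENNReal.ofReal ((J:ℝ)⁻¹) * J := by rw [Finset.sum_const, Finset.card_range]; simp
    _ = 1 := by
        rw [ENNReal.ofReal_inv_of_pos hJ0, ENNReal.ofReal_natCast]
        exact ENNReal.inv_mul_cancel (Nat.cast_ne_zero.mpr (by omega)) (ENNReal.natCast_ne_top J)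
  have hEG : ∫⁻ S, G S ∂μ ≤ 1 := by
    have hswap : ∫⁻ S, ∫⁻ w, ENNReal.ofReal (F w S) ∂P₀ ∂μ =
        ∫⁻ w, ∫⁻ S, ENNReal.ofReal (F w S) ∂μ ∂P₀ := by
      apply lintegral_lintegral_swap
      exact ((hFmeas.comp measurable_swap).ennreal_ofReal).aemeasurable
    simp only [hGdef]
    rw [hswap]
    calc ∫⁻ w, ∫⁻ S, ENNReal.ofReal (F w S) ∂μ ∂P₀ ≤ ∫⁻ _w, 1 ∂P₀ :=
          lintegral_mono (fun w => hinner_one w)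
    _ = 1 := by simp
  -- Markov event
  set A : Set (Fin N → 𝓔) := {S | G S < ENNReal.ofReal (1/δ)} with hAdef
  clear_value A
  have hmarkov : ENNReal.ofReal (1 - δ) ≤ μ A := by
    have hAc : μ Aᶜ ≤ ENNReal.ofReal δ := by
      have hcompl : Aᶜ = {S | ENNReal.ofReal (1/δ) ≤ G S} := by
        ext S; simp [hAdef, not_lt]
      rw [hcompl]
      calc μ {S | ENNReal.ofReal (1/δ) ≤ G S} ≤
            (∫⁻ S, G S ∂μ) / ENNReal.ofReal (1/δ) :=
            meas_ge_le_lintegral_div hGmeas.aemeasurable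
              (by simp [ENNReal.ofReal_eq_zero]; positivity) ENNReal.ofReal_ne_top
      _ ≤ 1 / ENNReal.ofReal (1/δ) := by
            apply ENNReal.div_le_div_right hEG
      _ = ENNReal.ofReal δ := by
            rw [one_div, one_div, ENNReal.ofReal_inv_of_pos hδ0, inv_inv]
    have hAmeas : MeasurableSet A := by
      rw [hAdef]; exact measurableSet_lt hGmeas measurable_const
    have h1 : μ A = 1 - μ Aᶜ := by
      have h2 := prob_compl_eq_one_sub (μ := μ) hAmeas.compl
      rw [compl_compl] at h2
      exact h2
    rw [h1]
    calc ENNReal.ofReal (1 - δ) = 1 - ENNReal.ofReal δ := by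
          rw [ENNReal.ofReal_sub _ hδ0.le]; simp
    _ ≤ 1 - μ Aᶜ := tsub_le_tsub_left hAc 1
  refine le_trans hmarkov (measure_mono ?_)
  intro S hSA
  simp only [Set.mem_setOf_eq] at hSA ⊢
  intro P hP
  by_cases hklcase : P ≪ P₀ ∧ Integrable (fun w => Real.log (P.rnDeriv P₀ w).toReal) P
  swap
  · -- KL infinite
    rw [klDiv, if_neg hklcase]
    have h2N' : ((2:ℝ≥0∞) * N) ≠ ⊤ := by
      exact ENNReal.mul_ne_top (by simp) (ENNReal.natCast_ne_top N)
    rw [show (⊤ + ENNReal.ofReal (Real.log (2 * Real.sqrt N / δ)) : ℝ≥0∞) = ⊤ from rfl]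
    rw [ENNReal.top_div_of_ne_top h2N', ENNReal.top_rpow_of_pos (by norm_num)]
    exact le_top
  · -- main case: KL finite
    obtain ⟨hac, hKint⟩ := hklcase
    rw [hAdef] at hSA
    simp only [Set.mem_setOf_eq] at hSA
    simp only [klDiv]
    rw [if_pos (⟨hac, hKint⟩ : P ≪ P₀ ∧ Integrable (fun x => Real.log (P.rnDeriv P₀ x).toReal) P)]
    set KLr := ∫ w, Real.log (P.rnDeriv P₀ w).toReal ∂P with hKLrdef
    set lg := Real.log (2 * Real.sqrt N / δ) with hlgdef
    clear_value KLr lg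
    have hsqrtN1 : (1:ℝ) ≤ Real.sqrt N := Real.one_le_sqrt.mpr hN1
    have hlgpos : 0 < lg := by
      rw [hlgdef]
      apply Real.log_pos
      have h1 : 2 * Real.sqrt N ≤ 2 * Real.sqrt N / δ := by
        rw [le_div_iff₀ hδ0]
        nlinarith
      linarith
    -- measurability and integrability over P
    have hFSmeas : Measurable (fun w => F w S) :=
      hFmeas.comp (measurable_id.prodMk measurable_const)
    have hDlSmeas : Measurable (fun w => Dl w S) :=
      hDlmeas.comp (measurable_id.prodMk measurable_const)
    have hLint : Integrable L P := integrable_of_bound P L hLmeas 1 (fun w => by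
      rw [Real.norm_eq_abs, abs_le]
      exact ⟨by linarith [(hL01 w).1], (hL01 w).2⟩)
    have hempmeas : Measurable (fun w => (N:ℝ)⁻¹ * ∑ i, C w (S i)) := by
      apply Measurable.const_mul
      exact Finset.measurable_sum _ (fun i _ => hCemeas (S i))
    have hempint : Integrable (fun w => (N:ℝ)⁻¹ * ∑ i, C w (S i)) P :=
      integrable_of_bound P _ hempmeas 1 (fun w => by
        rw [Real.norm_eq_abs, abs_le]
        exact ⟨by linarith [(hemp01 w S).1], (hemp01 w S).2⟩)
    have hDlint : Integrable (fun w => Dl w S) P := by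
      simp only [hDldef]
      exact hLint.sub hempint
    set EL := ∫ w, L w ∂P with hELdef
    set ELh := ∫ w, (N:ℝ)⁻¹ * ∑ i, C w (S i) ∂P with hELhdef
    clear_value EL ELh
    have hELh0 : 0 ≤ ELh := by
      rw [hELhdef]
      exact integral_nonneg (fun w => (hemp01 w S).1)
    have hEL1 : EL ≤ 1 := by
      rw [hELdef]
      calc ∫ w, L w ∂P ≤ ∫ _, (1:ℝ) ∂P :=
            integral_mono hLint (integrable_const 1) (fun w => (hL01 w).2)
      _ = 1 := by simp
    have ht_eq : ∫ w, Dl w S ∂P = EL - ELh := by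
      simp only [hDldef]
      rw [integral_sub hLint hempint, hELdef, hELhdef]
    -- change of measure (upper bound)
    have hGS : (∫⁻ w, ENNReal.ofReal (F w S) ∂P₀) = G S := by rw [hGdef]
    have hup : ∫ w, Real.log (F w S) ∂P ≤ KLr + Real.log (1/δ) := by
      rw [hKLrdef]
      apply change_of_measure P P₀ hac hKint (fun w => F w S) hFSmeas Flb Fub hFlb0
        (fun w => hFbd w S) (1/δ) (by positivity)
      rw [hGS]
      exact hSA.le
    -- integrability of log F
    have hrint : Integrable (fun w => Real.log (F w S)) P := by
      apply integrable_of_bound P _ hFSmeas.log (|Real.log Flb| + |Real.log Fub|)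
      intro w
      have hb := hFbd w S
      have hFw : 0 < F w S := lt_of_lt_of_le hFlb0 hb.1
      have h1 : Real.log Flb ≤ Real.log (F w S) := Real.log_le_log hFlb0 hb.1
      have h2 : Real.log (F w S) ≤ Real.log Fub := Real.log_le_log hFw hb.2
      rw [Real.norm_eq_abs, abs_le]
      constructor
      · linarith [neg_abs_le (Real.log Flb), abs_nonneg (Real.log Fub)]
      · linarith [le_abs_self (Real.log Fub), abs_nonneg (Real.log Flb)]
    -- lower bound
    have hlow : ∀ j, j < J → lam j * (EL - ELh) - (lam j)^2/(8*(N:ℝ)) - Real.log J ≤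
        ∫ w, Real.log (F w S) ∂P := by
      intro j hj
      have hpt : ∀ w, lam j * Dl w S - ((lam j)^2/(8*(N:ℝ)) + Real.log J) ≤
          Real.log (F w S) := by
        intro w
        have hterm_le : (J:ℝ)⁻¹ * Real.exp (lam j * Dl w S - (lam j)^2/(8*(N:ℝ))) ≤ F w S := by
          simp only [hFdef]
          apply mul_le_mul_of_nonneg_left _ (by positivity)
          exact Finset.single_le_sum
            (f := fun j => Real.exp (lam j * Dl w S - (lam j)^2/(8*(N:ℝ))))
            (fun j _ => (Real.exp_pos _).le) (Finset.mem_range.mpr hj)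
        have hlogle := Real.log_le_log (by positivity) hterm_le
        rw [Real.log_mul (by positivity) (Real.exp_pos _).ne', Real.log_exp,
          Real.log_inv] at hlogle
        linarith
      have hlhs_int : Integrable
          (fun w => lam j * Dl w S - ((lam j)^2/(8*(N:ℝ)) + Real.log J)) P :=
        (hDlint.const_mul _).sub (integrable_const _)
      have hcalc : ∫ w, (lam j * Dl w S - ((lam j)^2/(8*(N:ℝ)) + Real.log J)) ∂P
          = lam j * (EL - ELh) - ((lam j)^2/(8*(N:ℝ)) + Real.log J) := by
        rw [integral_sub (hDlint.const_mul (lam j)) (integrable_const _)]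
        rw [integral_const_mul, ht_eq, integral_const]
        simp
      have := integral_mono hlhs_int hrint hpt
      rw [hcalc] at this
      linarith
    -- main real bound
    have hmain : EL ≤ ELh + Real.sqrt ((max KLr 0 + lg)/(2*(N:ℝ))) := by
      by_cases htpos : EL - ELh ≤ 0
      · have := Real.sqrt_nonneg ((max KLr 0 + lg)/(2*(N:ℝ)))
        linarith
      · push_neg at htpos
        have ht1 : EL - ELh ≤ 1 := by linarith
        obtain ⟨j, hjJ, hjgrid⟩ := exists_grid hJpos htpos ht1
        have hlamj : lam j = 4*(N:ℝ)*(((j:ℝ) + 1/2)/(J:ℝ)) := by rw [hlamdef]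
        have hident : lam j * (EL-ELh) - (lam j)^2/(8*(N:ℝ)) =
            2*(N:ℝ)*(EL-ELh)^2 - 2*(N:ℝ)*((EL-ELh) - ((j:ℝ) + 1/2)/(J:ℝ))^2 := by
          rw [hlamj]
          field_simp
          ring
        obtain ⟨hgl, hgr⟩ := abs_le.mp hjgrid
        have hsq : ((EL-ELh) - ((j:ℝ) + 1/2)/(J:ℝ))^2 ≤ (1/(2*(J:ℝ)))^2 :=
          sq_le_sq' (by linarith) (by linarith)
        have h2 : 2*(N:ℝ)*((EL-ELh) - ((j:ℝ) + 1/2)/(J:ℝ))^2 ≤ (N:ℝ)/(2*(J:ℝ)^2) := by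
          calc 2*(N:ℝ)*((EL-ELh) - ((j:ℝ) + 1/2)/(J:ℝ))^2 ≤ 2*(N:ℝ)*(1/(2*(J:ℝ)))^2 :=
                mul_le_mul_of_nonneg_left hsq (by positivity)
          _ = (N:ℝ)/(2*(J:ℝ)^2) := by
              field_simp
        have hkey : 2*(N:ℝ)*(EL - ELh)^2 ≤
            KLr + Real.log (1/δ) + Real.log J + (N:ℝ)/(2*(J:ℝ)^2) := by
          have h1 := hlow j hjJ
          linarith
        have hglb := grid_log_bound hN1 hJ1 hJR1 hJR2
        have hlg_expand : lg = Real.log 2 + Real.log N / 2 - Real.log δ := by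
          rw [hlgdef, Real.log_div (by positivity) hδ0.ne',
            Real.log_mul (by norm_num) (by positivity), Real.log_sqrt (by positivity)]
        have hloginv : Real.log (1/δ) = -Real.log δ := by rw [one_div, Real.log_inv]
        have hkey2 : 2*(N:ℝ)*(EL-ELh)^2 ≤ max KLr 0 + lg := by
          have hm := le_max_left KLr 0
          linarith
        have hsq2 : (EL-ELh)^2 ≤ (max KLr 0 + lg)/(2*(N:ℝ)) := by
          rw [le_div_iff₀ (by positivity)]
          linarith
        have hfin := Real.sqrt_le_sqrt hsq2
        rw [Real.sqrt_sq htpos.le] at hfin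
        linarith
    -- convert to ENNReal
    have hCPint : ∀ i : Fin N, Integrable (fun w => C w (S i)) P := fun i =>
      integrable_of_bound P _ (hCemeas (S i)) 1 (fun w => by
        rw [Real.norm_eq_abs, abs_le]
        exact ⟨by linarith [(hC01 w (S i)).1], (hC01 w (S i)).2⟩)
    have hswap : ∫ e, ∫ w, C w e ∂P ∂D = EL := by
      have hI : Integrable (Function.uncurry (fun e w => C w e)) (D.prod P) := by
        apply integrable_of_bound _ _ (hC.comp measurable_swap) 1
        intro p
        obtain ⟨e, w⟩ := p
        show ‖C w e‖ ≤ 1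
        rw [Real.norm_eq_abs, abs_le]
        exact ⟨by linarith [(hC01 w e).1], (hC01 w e).2⟩
      have hs := integral_integral_swap (f := fun e w => C w e) hI
      rw [hs, hELdef]
      simp only [hLdef]
    have hemp_eq : (N:ℝ)⁻¹ * ∑ i : Fin N, ∫ w, C w (S i) ∂P = ELh := by
      rw [hELhdef]
      rw [integral_const_mul]
      rw [integral_finset_sum Finset.univ (fun i _ => hCPint i)]
    rw [hswap, hemp_eq]
    have h2Npos : (0:ℝ) < 2*(N:ℝ) := by positivity
    have hXpos : (0:ℝ) < (max KLr 0 + lg)/(2*(N:ℝ)) := by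
      apply div_pos _ h2Npos
      have := le_max_right KLr 0
      linarith
    have hX : ENNReal.ofReal KLr + ENNReal.ofReal lg = ENNReal.ofReal (max KLr 0 + lg) := by
      rcases le_total KLr 0 with h | h
      · rw [ENNReal.ofReal_of_nonpos h, max_eq_right h, zero_add, zero_add]
      · rw [max_eq_left h, ← ENNReal.ofReal_add h hlgpos.le]
    have h2Ne : ((2:ℝ≥0∞) * N) = ENNReal.ofReal (2*(N:ℝ)) := by
      rw [ENNReal.ofReal_mul (by norm_num), ENNReal.ofReal_ofNat, ENNReal.ofReal_natCast]
    have htail : ENNReal.ofReal (Real.sqrt ((max KLr 0 + lg)/(2*(N:ℝ)))) =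
        ((ENNReal.ofReal KLr + ENNReal.ofReal lg) / ((2:ℝ≥0∞) * N)) ^ (1/2:ℝ) := by
      rw [hX, h2Ne, ← ENNReal.ofReal_div_of_pos h2Npos]
      rw [ENNReal.ofReal_rpow_of_pos hXpos]
      congr 1
      rw [Real.sqrt_eq_rpow]
    calc ENNReal.ofReal EL
        ≤ ENNReal.ofReal (ELh + Real.sqrt ((max KLr 0 + lg)/(2*(N:ℝ)))) :=
          ENNReal.ofReal_le_ofReal hmain
    _ = ENNReal.ofReal ELh + ENNReal.ofReal (Real.sqrt ((max KLr 0 + lg)/(2*(N:ℝ)))) :=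
          ENNReal.ofReal_add hELh0 (Real.sqrt_nonneg _)
    _ = ENNReal.ofReal ELh +
          ((ENNReal.ofReal KLr + ENNReal.ofReal lg) / ((2:ℝ≥0∞) * N)) ^ (1/2:ℝ) := by
          rw [htail]
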